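/- There exist uncountably many transcendental real numbers τ > 0 such that the inequality 0 < ‖ n^τ ‖ ≤ 2^{−n} has infinitely many solutions in positive integers n. -/
import Mathlib

open Real Set Filter

/-- Distance from a real number to the nearest integer. -/
noncomputable def distNearestInt (x : ℝ) : ℝ := |x - round x|

namespace Stmt9Aux

lemma dni_add (m : ℕ) {f : ℝ} (h0 : 0 ≤ f) (h1 : f < 1/2) :
    distNearestInt ((m : ℝ) + f) = f := by
  have hr : round ((m : ℝ) + f) = (m : ℤ) := by
    rw [round_eq, Int.floor_eq_iff]
    constructor
    · push_cast; linarith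
    · push_cast; linarith
  rw [distNearestInt, hr]
  push_cast
  rw [add_sub_cancel_left, abs_of_nonneg h0]

/-- Open set of good exponents for base `n`. -/
noncomputable def U (n : ℕ) : Set ℝ :=
  ⋃ m : ℕ, Ioo (logb n ((m : ℝ) + 1 + ((2:ℝ)^(n+2))⁻¹))
    (logb n ((m : ℝ) + 1 + ((2:ℝ)^(n+1))⁻¹))

lemma isOpen_U (n : ℕ) : IsOpen (U n) := isOpen_iUnion fun _ => isOpen_Ioo

lemma mem_U (n : ℕ) (hn : 2 ≤ n) {τ : ℝ} (hτ : τ ∈ U n) :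
    0 < distNearestInt ((n:ℝ) ^ τ) ∧ distNearestInt ((n:ℝ) ^ τ) ≤ ((2:ℝ)^n)⁻¹ := by
  obtain ⟨m, hm⟩ := mem_iUnion.mp hτ
  have hb : (1:ℝ) < n := by exact_mod_cast Nat.lt_of_lt_of_le one_lt_two hn
  have hb0 : (0:ℝ) < n := by linarith
  set M : ℝ := (m : ℝ) + 1 with hMdef
  have hε2 : (0:ℝ) < ((2:ℝ)^(n+2))⁻¹ := by positivity
  have hε1 : ((2:ℝ)^(n+1))⁻¹ < 1/2 := by
    rw [inv_lt_comm₀ (by positivity) (by norm_num)]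
    have : (2:ℝ) < (2:ℝ)^(n+1) := by
      calc (2:ℝ) < 2^2 := by norm_num
      _ ≤ 2^(n+1) := by apply pow_le_pow_right₀ (by norm_num); omega
    linarith
  have hε12 : ((2:ℝ)^(n+1))⁻¹ < ((2:ℝ)^n)⁻¹ := by
    apply inv_strictAnti₀ (by positivity)
    apply pow_lt_pow_right₀ (by norm_num); omega
  have h1 : M + ((2:ℝ)^(n+2))⁻¹ < (n:ℝ) ^ τ := by
    have := (Real.rpow_lt_rpow_left_iff hb).mpr hm.1
    rwa [Real.rpow_logb hb0 (ne_of_gt hb) (by positivity)] at this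
  have h2 : (n:ℝ) ^ τ < M + ((2:ℝ)^(n+1))⁻¹ := by
    have := (Real.rpow_lt_rpow_left_iff hb).mpr hm.2
    rwa [Real.rpow_logb hb0 (ne_of_gt hb) (by positivity)] at this
  set f : ℝ := (n:ℝ) ^ τ - M with hfdef
  have hf0 : 0 < f := by simp only [hfdef]; linarith
  have hf1 : f < 1/2 := by simp only [hfdef]; linarith
  have heq : (n:ℝ) ^ τ = ((m + 1 : ℕ) : ℝ) + f := by push_cast; simp only [hfdef, hMdef]; ring
  rw [heq, dni_add _ hf0.le hf1]
  constructor
  · exact hf0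
  · have : f < ((2:ℝ)^(n+1))⁻¹ := by simp only [hfdef]; linarith
    linarith

lemma dense_step {u v : ℝ} (hu : 1 ≤ u) (huv : u < v) (N : ℕ) :
    ∃ n, N ≤ n ∧ 2 ≤ n ∧ (Ioo u v ∩ U n).Nonempty := by
  set c : ℝ := (u + v) / 2 with hcdef
  have huc : u < c := by simp only [hcdef]; linarith
  have hcv : c < v := by simp only [hcdef]; linarith
  have hc1 : 1 ≤ c := by linarith
  obtain ⟨n, hnN, hn2, hn8⟩ : ∃ n : ℕ, N ≤ n ∧ 2 ≤ n ∧ (8:ℝ)/(v-u) ≤ n := by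
    refine ⟨max N (max 2 ⌈(8:ℝ)/(v-u)⌉₊), le_max_left _ _,
      le_trans (le_max_left _ _) (le_max_right _ _), ?_⟩
    calc (8:ℝ)/(v-u) ≤ (⌈(8:ℝ)/(v-u)⌉₊ : ℝ) := Nat.le_ceil _
    _ ≤ _ := by exact_mod_cast le_trans (le_max_right _ _) (le_max_right _ _)
  have hb : (1:ℝ) < n := by exact_mod_cast Nat.lt_of_lt_of_le one_lt_two hn2
  have hb0 : (0:ℝ) < n := by linarith
  have hb2 : (2:ℝ) ≤ n := by exact_mod_cast hn2
  set m : ℕ := ⌊(n:ℝ)^c⌋₊ with hmdef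
  set M : ℝ := (m : ℝ) + 1 with hMdef
  have hcpos : 0 < (n:ℝ)^c := rpow_pos_of_pos hb0 c
  have hMgt : (n:ℝ)^c < M := Nat.lt_floor_add_one _
  have hMle : M ≤ (n:ℝ)^c + 1 := by
    have := Nat.floor_le hcpos.le
    simp only [hMdef]; linarith
  have hlog2 : (1:ℝ)/2 ≤ Real.log n := by
    have h2 : (0.6931471803:ℝ) < Real.log 2 := Real.log_two_gt_d9
    have := Real.log_le_log (by norm_num : (0:ℝ) < 2) hb2
    linarith
  have hnc_ge : (n:ℝ) ≤ (n:ℝ)^c := by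
    calc (n:ℝ) = (n:ℝ)^(1:ℝ) := (Real.rpow_one _).symm
    _ ≤ (n:ℝ)^c := by
      apply Real.rpow_le_rpow_of_exponent_le (le_of_lt hb) hc1
  have h8 : 8 ≤ (n:ℝ) * (v - u) := by
    rw [div_le_iff₀ (by linarith)] at hn8; linarith
  have key : (n:ℝ)^c + 2 ≤ (n:ℝ)^v := by
    have h1 : (n:ℝ)^v = (n:ℝ)^c * (n:ℝ)^(v-c) := by
      rw [← Real.rpow_add hb0]; ring_nf
    have h2 : 1 + (v-c) * Real.log n ≤ (n:ℝ)^(v-c) := by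
      rw [Real.rpow_def_of_pos hb0]
      have := Real.add_one_le_exp ((v-c) * Real.log n)
      rw [mul_comm] at this
      linarith [this]
    have e1 : (n:ℝ)^c * (1 + (v-c) * Real.log n) ≤ (n:ℝ)^v := by
      rw [h1]; exact mul_le_mul_of_nonneg_left h2 hcpos.le
    have hvc : v - c = (v - u)/2 := by simp only [hcdef]; ring
    have hvc0 : 0 ≤ v - c := by linarith
    have e3 : (n:ℝ) * ((v-c) * (1/2)) ≤ (n:ℝ)^c * ((v-c) * Real.log n) := by
      apply mul_le_mul hnc_ge _ _ hcpos.le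
      · exact mul_le_mul_of_nonneg_left hlog2 hvc0
      · positivity
    have e4 : 2 ≤ (n:ℝ) * ((v-c) * (1/2)) := by
      rw [hvc]; nlinarith [h8]
    nlinarith [e1, e3, e4]
  refine ⟨n, hnN, hn2, ?_⟩
  set ε₂ : ℝ := ((2:ℝ)^(n+2))⁻¹ with hε₂def
  set ε₁ : ℝ := ((2:ℝ)^(n+1))⁻¹ with hε₁def
  have hε2pos : 0 < ε₂ := by positivity
  have hε12 : ε₂ < ε₁ := by
    apply inv_strictAnti₀ (by positivity)
    apply pow_lt_pow_right₀ (by norm_num); omega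
  have hε1le : ε₁ < 1 := by
    simp only [hε₁def]
    rw [inv_lt_one_iff₀]
    right; exact one_lt_pow₀ (by norm_num) (by omega)
  have hlo : u < logb n (M + ε₂) := by
    have hc_eq : c = logb n ((n:ℝ)^c) := (Real.logb_rpow hb0 (ne_of_gt hb)).symm
    have : c ≤ logb n (M + ε₂) := by
      rw [hc_eq]
      exact Real.logb_le_logb_of_le hb hcpos (by linarith)
    linarith
  have hhi : logb n (M + ε₁) < v := by
    have hlt : M + ε₁ < (n:ℝ)^v := by linarith
    calc logb n (M + ε₁) < logb n ((n:ℝ)^v) :=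
      Real.logb_lt_logb hb (by positivity) hlt
    _ = v := Real.logb_rpow hb0 (ne_of_gt hb)
  have hmid : logb n (M + ε₂) < logb n (M + ε₁) :=
    Real.logb_lt_logb hb (by positivity) (by linarith)
  refine ⟨(logb n (M + ε₂) + logb n (M + ε₁))/2, ⟨⟨by linarith, by linarith⟩, ?_⟩⟩
  apply mem_iUnion.mpr
  exact ⟨m, by constructor <;> [skip; skip] <;> simp only [hMdef, hε₂def, hε₁def] <;> linarith⟩

noncomputable def W (N : ℕ) : Set ℝ := Iio 1 ∪ ⋃ k, U (k + N + 2)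

lemma isOpen_W (N : ℕ) : IsOpen (W N) :=
  (isOpen_Iio).union (isOpen_iUnion fun k => isOpen_U _)

lemma dense_W (N : ℕ) : Dense (W N) := by
  rw [dense_iff_inter_open]
  intro G hG hGne
  by_cases hx : ∃ x ∈ G, x < 1
  · obtain ⟨x, hxG, hx1⟩ := hx
    exact ⟨x, hxG, Or.inl hx1⟩
  · push_neg at hx
    obtain ⟨x, hxG⟩ := hGne
    obtain ⟨ε, hε, hball⟩ := Metric.isOpen_iff.mp hG x hxG
    have h1x : 1 ≤ x := hx x hxG
    obtain ⟨n, hnN, hn2, τ, hτIoo, hτU⟩ :=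
      dense_step h1x (by linarith : x < x + ε/2) (N + 2)
    have hτG : τ ∈ G := by
      apply hball
      rw [Metric.mem_ball, Real.dist_eq, abs_lt]
      obtain ⟨h1, h2⟩ := hτIoo
      constructor <;> linarith
    refine ⟨τ, hτG, Or.inr ?_⟩
    refine mem_iUnion.mpr ⟨n - (N + 2), ?_⟩
    have hn : n - (N + 2) + N + 2 = n := by omega
    rw [hn]; exact hτU

end Stmt9Aux

open Stmt9Aux in
theorem stmt_9 :
    ¬ ({τ : ℝ | 0 < τ ∧ Transcendental ℚ τ ∧
        {n : ℕ | 0 < n ∧ 0 < distNearestInt ((n : ℝ) ^ τ) ∧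
          distNearestInt ((n : ℝ) ^ τ) ≤ ((2 : ℝ) ^ n)⁻¹}.Infinite}).Countable := by
  intro hA
  set A : Set ℝ := {τ : ℝ | 0 < τ ∧ Transcendental ℚ τ ∧
        {n : ℕ | 0 < n ∧ 0 < distNearestInt ((n : ℝ) ^ τ) ∧
          distNearestInt ((n : ℝ) ^ τ) ≤ ((2 : ℝ) ^ n)⁻¹}.Infinite} with hAdef
  have hR : (⋂ N, W N) ∈ residual ℝ :=
    countable_iInter_mem.mpr fun N => residual_of_dense_open (isOpen_W N) (dense_W N)
  set C : Set ℝ := A ∪ {x : ℝ | IsAlgebraic ℚ x} with hCdef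
  have hC : C.Countable := hA.union (Algebraic.countable ℚ ℝ)
  have hCc : Cᶜ ∈ residual ℝ := by
    have hEq : Cᶜ = ⋂ x ∈ C, ({x}ᶜ : Set ℝ) := by
      ext y
      simp only [mem_compl_iff, mem_iInter, mem_singleton_iff]
      constructor
      · intro h x hx hyx; exact h (hyx ▸ hx)
      · intro h hyC; exact h y hyC rfl
    rw [hEq]
    exact (countable_bInter_mem hC).mpr fun x _ =>
      residual_of_dense_open isOpen_compl_singleton (dense_compl_singleton x)
  have hD : ((⋂ N, W N) ∩ Cᶜ) ∈ residual ℝ := inter_mem hR hCc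
  obtain ⟨τ, hτD, hτ1⟩ := (dense_of_mem_residual hD).exists_mem_open isOpen_Ioi
    (show (Ioi (1:ℝ)).Nonempty from ⟨2, by norm_num [mem_Ioi]⟩)
  obtain ⟨hτR, hτC⟩ := hτD
  rw [mem_Ioi] at hτ1
  have hmemA : τ ∈ A := by
    refine ⟨by linarith, fun halg => hτC (Or.inr halg), ?_⟩
    have hsol : ∀ N : ℕ, ∃ k, (k ∈ {n : ℕ | 0 < n ∧ 0 < distNearestInt ((n : ℝ) ^ τ) ∧
          distNearestInt ((n : ℝ) ^ τ) ≤ ((2 : ℝ) ^ n)⁻¹}) ∧ N ≤ k := by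
      intro N
      have hτW := mem_iInter.mp hτR N
      rcases hτW with h | h
      · exact absurd h (by simp [mem_Iio]; linarith)
      · obtain ⟨k, hk⟩ := mem_iUnion.mp h
        have hmU := mem_U (k + N + 2) (by omega) hk
        exact ⟨k + N + 2, ⟨by omega, hmU.1, hmU.2⟩, by omega⟩
    by_contra hfin
    rw [Set.not_infinite] at hfin
    obtain ⟨B, hB⟩ := hfin.bddAbove
    obtain ⟨k, hkS, hk⟩ := hsol (B + 1)
    exact absurd (hB hkS) (by omega)
  exact hτC (Or.inl hmemA)
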